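/- The index is additive under composition: if A and B are Fredholm matrices in B(K), then ind(AB) = ind(A) + ind(B). -/

import Mathlib

open Classical

/-- A matrix is row finite if every row has finitely many nonzero entries. -/
def rowFin {K : Type*} [Field K] (A : ℕ → ℕ → K) : Prop := ∀ i, {j | A i j ≠ 0}.Finite

/-- A matrix is column finite if every column has finitely many nonzero entries. -/
def colFin {K : Type*} [Field K] (A : ℕ → ℕ → K) : Prop := ∀ j, {i | A i j ≠ 0}.Finite

/-- `A ∈ B(K)`: row and column finite. -/
def RCF {K : Type*} [Field K] (A : ℕ → ℕ → K) : Prop := rowFin A ∧ colFin A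

/-- `A ∈ M_∞(K)`: finitely many nonzero entries in total. -/
def MInf {K : Type*} [Field K] (A : ℕ → ℕ → K) : Prop :=
  {p : ℕ × ℕ | A p.1 p.2 ≠ 0}.Finite

/-- Matrix multiplication (the sum is finite for row/column finite matrices). -/
noncomputable def matMul {K : Type*} [Field K] (A B : ℕ → ℕ → K) : ℕ → ℕ → K :=
  fun i j => ∑ᶠ k, A i k * B k j

/-- The identity matrix. -/
def idm {K : Type*} [Field K] : ℕ → ℕ → K := fun i j => if i = j then 1 else 0

/-- The `j`-th column of `A` as a finitely supported vector (junk value `0` if the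
column is not finitely supported). -/
noncomputable def col {K : Type*} [Field K] (A : ℕ → ℕ → K) (j : ℕ) : ℕ →₀ K :=
  if h : (Function.support fun i => A i j).Finite then Finsupp.ofSupportFinite _ h else 0

/-- The linear transformation `L_A : V → V`, `x ↦ A x`, on the space `V = ℕ →₀ K`
of finitely supported sequences. -/
noncomputable def LA {K : Type*} [Field K] (A : ℕ → ℕ → K) : (ℕ →₀ K) →ₗ[K] (ℕ →₀ K) :=
  Finsupp.linearCombination K (col A)

/-- `A` is (algebraically) Fredholm: invertible modulo `M_∞(K)`. -/
def Fredholm {K : Type*} [Field K] (A : ℕ → ℕ → K) : Prop :=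
  ∃ A₀ : ℕ → ℕ → K, RCF A₀ ∧ MInf (matMul A A₀ - idm) ∧ MInf (matMul A₀ A - idm)

/-- The Fredholm index `dim ker L_A − dim coker L_A`. -/
noncomputable def indx {K : Type*} [Field K] (A : ℕ → ℕ → K) : ℤ :=
  (Module.finrank K (LinearMap.ker (LA A)) : ℤ)
    - (Module.finrank K ((ℕ →₀ K) ⧸ LinearMap.range (LA A)) : ℤ)

/-- Forward shift matrix `S_i` (ones on the `i`-th subdiagonal). -/
def Sp {K : Type*} [Field K] (i : ℕ) : ℕ → ℕ → K := fun m n => if m = n + i then 1 else 0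

/-- Backward shift matrix `S_{-i}` (ones on the `i`-th superdiagonal). -/
def Sm {K : Type*} [Field K] (i : ℕ) : ℕ → ℕ → K := fun m n => if n = m + i then 1 else 0

section Aux
variable {K : Type*} [Field K]

lemma MInf.toColFin {A : ℕ → ℕ → K} (h : MInf A) : colFin A := by
  intro j
  apply (h.image Prod.fst).subset
  intro i hi
  exact ⟨(i, j), hi, rfl⟩

lemma colFin_idm : colFin (idm : ℕ → ℕ → K) := by
  intro j
  apply (Set.finite_singleton j).subset
  intro i hi
  simp only [idm, Set.mem_setOf_eq, ne_eq, ite_eq_right_iff, not_forall] at hi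
  simp [hi.1]

lemma col_apply {A : ℕ → ℕ → K} (h : colFin A) (j i : ℕ) : col A j i = A i j := by
  have hf : (Function.support fun i => A i j).Finite := h j
  rw [col, dif_pos hf]
  rfl

lemma col_support {A : ℕ → ℕ → K} (h : colFin A) (j k : ℕ) :
    k ∈ (col A j).support ↔ A k j ≠ 0 := by
  rw [Finsupp.mem_support_iff, col_apply h]

lemma LA_single (A : ℕ → ℕ → K) (j : ℕ) (b : K) :
    LA A (Finsupp.single j b) = b • col A j := by
  simp [LA, Finsupp.linearCombination_single]

lemma colFin_matMul {A B : ℕ → ℕ → K} (hA : colFin A) (hB : colFin B) :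
    colFin (matMul A B) := by
  intro j
  have hsub : {i | matMul A B i j ≠ 0} ⊆
      ⋃ k ∈ ((col B j).support : Set ℕ), {i | A i k ≠ 0} := by
    intro i hi
    simp only [matMul, Set.mem_setOf_eq] at hi
    obtain ⟨k, hk⟩ : ∃ k, A i k * B k j ≠ 0 := by
      by_contra hc
      push_neg at hc
      exact hi (finsum_eq_zero_of_forall_eq_zero hc)
    have hBk : B k j ≠ 0 := fun h0 => hk (by rw [h0, mul_zero])
    have hAk : A i k ≠ 0 := fun h0 => hk (by rw [h0, zero_mul])
    exact Set.mem_biUnion ((col_support hB j k).2 hBk) hAk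
  exact (Set.Finite.biUnion ((col B j).support.finite_toSet) (fun k _ => hA k)).subset hsub

lemma matMul_apply {A B : ℕ → ℕ → K} (hB : colFin B) (i j : ℕ) :
    matMul A B i j = ∑ k ∈ (col B j).support, A i k * B k j := by
  apply finsum_eq_sum_of_support_subset
  intro k hk
  have : B k j ≠ 0 := by
    intro h0
    apply hk
    simp [Function.mem_support, h0]
  exact (col_support hB j k).2 this

lemma LA_matMul {A B : ℕ → ℕ → K} (hA : colFin A) (hB : colFin B) :
    LA (matMul A B) = (LA A).comp (LA B) := by
  apply Finsupp.lhom_ext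
  intro j b
  rw [LinearMap.comp_apply, LA_single, LA_single, map_smul]
  congr 1
  have hcol : ∀ k, LA A (Finsupp.single k (1 : K)) = col A k := by
    intro k; rw [LA_single, one_smul]
  ext i
  rw [col_apply (colFin_matMul hA hB), matMul_apply hB]
  rw [LA, Finsupp.linearCombination_apply, Finsupp.sum_apply, Finsupp.sum]
  apply Finset.sum_congr rfl
  intro k hk
  rw [Finsupp.smul_apply, col_apply hA, col_apply hB, smul_eq_mul, mul_comm]

lemma LA_idm : LA (idm : ℕ → ℕ → K) = LinearMap.id := by
  apply Finsupp.lhom_ext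
  intro j b
  rw [LA_single, LinearMap.id_apply]
  ext i
  rw [Finsupp.smul_apply, col_apply colFin_idm, Finsupp.single_apply, idm, smul_eq_mul]
  by_cases h : i = j
  · simp [h]
  · rw [if_neg h, mul_zero, if_neg fun hj => h hj.symm]

lemma LA_add {M N : ℕ → ℕ → K} (hM : colFin M) (hN : colFin N) :
    LA (M + N) = LA M + LA N := by
  have hMN : colFin (M + N) := by
    intro j
    apply ((hM j).union (hN j)).subset
    intro i hi
    by_contra hc
    simp only [Set.mem_union, Set.mem_setOf_eq, not_or, not_not] at hc
    exact hi (show M i j + N i j = 0 by rw [hc.1, hc.2, add_zero])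
  apply Finsupp.lhom_ext
  intro j b
  rw [LinearMap.add_apply, LA_single, LA_single, LA_single, ← smul_add]
  congr 1
  ext i
  rw [Finsupp.add_apply, col_apply hMN, col_apply hM, col_apply hN]
  rfl

lemma MInf.fdRange {F : ℕ → ℕ → K} (h : MInf F) :
    FiniteDimensional K (LinearMap.range (LA F)) := by
  rw [LA, Finsupp.range_linearCombination]
  have hfin : (insert (0 : ℕ →₀ K) (col F '' (Prod.snd '' {p : ℕ × ℕ | F p.1 p.2 ≠ 0}))).Finite :=
    ((h.image Prod.snd).image _).insert 0
  have hsub : Set.range (col F) ⊆ insert 0 (col F '' (Prod.snd '' {p : ℕ × ℕ | F p.1 p.2 ≠ 0})) := by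
    rintro _ ⟨j, rfl⟩
    by_cases hz : ∀ i, F i j = 0
    · left
      ext i
      rw [col_apply h.toColFin, hz i]; rfl
    · right
      push_neg at hz
      obtain ⟨i, hi⟩ := hz
      exact ⟨j, ⟨(i, j), hi, rfl⟩, rfl⟩
  haveI : FiniteDimensional K (Submodule.span K
      (insert 0 (col F '' (Prod.snd '' {p : ℕ × ℕ | F p.1 p.2 ≠ 0})))) :=
    FiniteDimensional.span_of_finite K hfin
  exact Submodule.finiteDimensional_of_le (Submodule.span_mono hsub)

end Aux

section Index
variable {K : Type*} [Field K]

lemma fd_of_map {M N : Type*} [AddCommGroup M] [Module K M] [AddCommGroup N] [Module K N]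
    (φ : M →ₗ[K] N) (h1 : FiniteDimensional K (LinearMap.ker φ)) (h2 : FiniteDimensional K N) :
    FiniteDimensional K M := by
  haveI := h2
  apply Module.finite_def.mpr
  apply Submodule.fg_of_fg_map_of_fg_inf_ker φ
  · rw [Submodule.map_top]
    exact (Submodule.fg_iff_finiteDimensional _).2 inferInstance
  · rw [top_inf_eq]
    exact (Submodule.fg_iff_finiteDimensional _).2 h1

lemma fd_ext {M : Type*} [AddCommGroup M] [Module K M] (S : Submodule K M)
    (h1 : FiniteDimensional K S) (h2 : FiniteDimensional K (M ⧸ S)) :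
    FiniteDimensional K M :=
  fd_of_map S.mkQ (by rwa [Submodule.ker_mkQ]) h2

lemma index_comp {V : Type*} [AddCommGroup V] [Module K V] (f g : V →ₗ[K] V)
    (hkf : FiniteDimensional K (LinearMap.ker f))
    (hkg : FiniteDimensional K (LinearMap.ker g))
    (hcf : FiniteDimensional K (V ⧸ LinearMap.range f))
    (hcg : FiniteDimensional K (V ⧸ LinearMap.range g)) :
    (Module.finrank K (LinearMap.ker (g.comp f)) : ℤ)
        - Module.finrank K (V ⧸ LinearMap.range (g.comp f))
      = ((Module.finrank K (LinearMap.ker f) : ℤ)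
          - Module.finrank K (V ⧸ LinearMap.range f))
        + ((Module.finrank K (LinearMap.ker g) : ℤ)
          - Module.finrank K (V ⧸ LinearMap.range g)) := by
  classical
  set kf := LinearMap.ker f with hkf_def
  set kg := LinearMap.ker g with hkg_def
  set rf := LinearMap.range f with hrf_def
  set rg := LinearMap.range g with hrg_def
  set kgf := LinearMap.ker (g.comp f) with hkgf_def
  set q := LinearMap.range (g.comp f) with hq_def
  haveI := hkf; haveI := hkg; haveI := hcf; haveI := hcg
  haveI : FiniteDimensional K ↥(kg ⊓ rf) := Submodule.finiteDimensional_of_le inf_le_left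
  -- the map φ : ker(g∘f) → kg ⊓ rf induced by f
  have hmem : ∀ x : kgf, f x.1 ∈ kg ⊓ rf := by
    rintro ⟨x, hx⟩
    refine ⟨?_, ⟨x, rfl⟩⟩
    simpa [kg, kgf, LinearMap.mem_ker] using hx
  set φ : kgf →ₗ[K] ↥(kg ⊓ rf) :=
    LinearMap.codRestrict (kg ⊓ rf) (f.domRestrict kgf) hmem with hφ_def
  have hφsurj : Function.Surjective φ := by
    rintro ⟨y, hy⟩
    obtain ⟨hy1, hy2⟩ := hy
    obtain ⟨x, rfl⟩ := hy2
    have hxk : x ∈ kgf := by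
      simpa [kg, kgf, LinearMap.mem_ker, LinearMap.comp_apply] using hy1
    exact ⟨⟨x, hxk⟩, Subtype.ext rfl⟩
  have hle : kf ≤ kgf := by
    intro x hx
    have : f x = 0 := hx
    simp [kgf, LinearMap.mem_ker, LinearMap.comp_apply, this]
  have hφker : LinearMap.ker φ = Submodule.comap kgf.subtype kf := by
    ext x
    change φ x = 0 ↔ f x.1 = 0
    exact Subtype.ext_iff
  haveI hkerφfd : FiniteDimensional K (LinearMap.ker φ) := by
    rw [hφker]
    exact (Submodule.comapSubtypeEquivOfLe hle).symm.finiteDimensional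
  haveI : FiniteDimensional K kgf := fd_of_map φ hkerφfd inferInstance
  have E1 : Module.finrank K ↥(kg ⊓ rf) + Module.finrank K kf = Module.finrank K kgf := by
    have h := LinearMap.finrank_range_add_finrank_ker φ
    rwa [LinearMap.range_eq_top.2 hφsurj, finrank_top, hφker,
      (Submodule.comapSubtypeEquivOfLe hle).finrank_eq] at h
  -- the map ψ : kg → V ⧸ rf
  set ψ : ↥kg →ₗ[K] V ⧸ rf := rf.mkQ.comp kg.subtype with hψ_def
  have hψker : LinearMap.ker ψ = Submodule.comap kg.subtype (kg ⊓ rf) := by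
    rw [hψ_def, LinearMap.ker_comp, Submodule.ker_mkQ]
    ext x
    simp only [Submodule.mem_comap, Submodule.coe_subtype, Submodule.mem_inf]
    exact ⟨fun h => ⟨x.2, h⟩, fun h => h.2⟩
  have hψrange : LinearMap.range ψ = Submodule.map rf.mkQ kg := by
    rw [hψ_def, LinearMap.range_comp, Submodule.range_subtype]
  have E2 : Module.finrank K ↥(Submodule.map rf.mkQ kg) + Module.finrank K ↥(kg ⊓ rf)
      = Module.finrank K kg := by
    have h := LinearMap.finrank_range_add_finrank_ker ψ
    rwa [hψrange, hψker, (Submodule.comapSubtypeEquivOfLe (inf_le_left : kg ⊓ rf ≤ kg)).finrank_eq] at h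
  -- the map θ : V → V ⧸ q induced by g
  set θ : V →ₗ[K] V ⧸ q := q.mkQ.comp g with hθ_def
  have hθrange : LinearMap.range θ = Submodule.map q.mkQ rg := by
    rw [hθ_def, LinearMap.range_comp]
  have hθker : LinearMap.ker θ = rf ⊔ kg := by
    rw [hθ_def, LinearMap.ker_comp, Submodule.ker_mkQ]
    ext x
    simp only [Submodule.mem_comap]
    constructor
    · rintro ⟨y, hy⟩
      have hb : x - f y ∈ kg := by
        simp only [kg, LinearMap.mem_ker, map_sub]
        rw [show g (f y) = g x from hy]
        exact sub_self _
      have hx : x = f y + (x - f y) := by abel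
      rw [hx]
      exact Submodule.add_mem_sup ⟨y, rfl⟩ hb
    · intro hx
      obtain ⟨a, ha, b, hb, rfl⟩ := Submodule.mem_sup.1 hx
      obtain ⟨y, rfl⟩ := ha
      refine ⟨y, ?_⟩
      have hb0 : g b = 0 := hb
      simp [LinearMap.comp_apply, map_add, hb0]
  -- V ⧸ (rf ⊔ kg) is finite dimensional (quotient of V ⧸ rf)
  have hmapQsurj : Function.Surjective
      (Submodule.mapQ rf (rf ⊔ kg) LinearMap.id (by simpa using (le_sup_left : rf ≤ rf ⊔ kg))) := by
    intro z
    obtain ⟨x, rfl⟩ := (rf ⊔ kg).mkQ_surjective z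
    exact ⟨rf.mkQ x, by simp [Submodule.mapQ_apply]⟩
  haveI : FiniteDimensional K (V ⧸ (rf ⊔ kg)) := Module.Finite.of_surjective _ hmapQsurj
  have EP : Module.finrank K ↥(Submodule.map q.mkQ rg) = Module.finrank K (V ⧸ (rf ⊔ kg)) := by
    rw [← hθrange, ← hθker]
    exact θ.quotKerEquivRange.finrank_eq.symm
  -- E3
  have hPmap : Submodule.map rf.mkQ (rf ⊔ kg) = Submodule.map rf.mkQ kg := by
    rw [Submodule.map_sup]
    have hbot : Submodule.map rf.mkQ rf = ⊥ := by
      rw [eq_bot_iff]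
      rintro z ⟨x, hx, rfl⟩
      simp [Submodule.mkQ_apply, (Submodule.Quotient.mk_eq_zero rf).2 hx]
    rw [hbot, bot_sup_eq]
  have E3 : Module.finrank K (V ⧸ (rf ⊔ kg)) + Module.finrank K ↥(Submodule.map rf.mkQ kg)
      = Module.finrank K (V ⧸ rf) := by
    have h := Submodule.finrank_quotient_add_finrank (Submodule.map rf.mkQ kg)
    rw [← hPmap] at h
    rw [(Submodule.quotientQuotientEquivQuotient rf (rf ⊔ kg) le_sup_left).finrank_eq] at h
    rwa [hPmap] at h
  -- q ≤ rg
  have hqle : q ≤ rg := by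
    rintro z ⟨y, rfl⟩
    exact ⟨f y, rfl⟩
  haveI hfdP : FiniteDimensional K ↥(Submodule.map q.mkQ rg) := by
    haveI : FiniteDimensional K (V ⧸ LinearMap.ker θ) := by
      rw [hθker]; infer_instance
    haveI : FiniteDimensional K ↥(LinearMap.range θ) :=
      θ.quotKerEquivRange.finiteDimensional
    rw [← hθrange]; infer_instance
  haveI : FiniteDimensional K (V ⧸ q) := by
    apply fd_ext (Submodule.map q.mkQ rg) hfdP
    exact (Submodule.quotientQuotientEquivQuotient q rg hqle).symm.finiteDimensional
  have E4 : Module.finrank K (V ⧸ rg) + Module.finrank K ↥(Submodule.map q.mkQ rg)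
      = Module.finrank K (V ⧸ q) := by
    have h := Submodule.finrank_quotient_add_finrank (Submodule.map q.mkQ rg)
    rwa [(Submodule.quotientQuotientEquivQuotient q rg hqle).finrank_eq] at h
  rw [EP] at E4
  omega

end Index

section Fred
variable {K : Type*} [Field K]

lemma fdKer {A : ℕ → ℕ → K} (hA : RCF A) (h : Fredholm A) :
    FiniteDimensional K (LinearMap.ker (LA A)) := by
  obtain ⟨A₀, hA₀, _, hMl⟩ := h
  set F := matMul A₀ A - idm with hF_def
  have hcl : colFin F := hMl.toColFin
  have e1 : LA (matMul A₀ A) = LA F + LinearMap.id := by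
    have hsum : matMul A₀ A = F + idm := by rw [hF_def, sub_add_cancel]
    rw [hsum, LA_add hcl colFin_idm, LA_idm]
  have hcomp : LA (matMul A₀ A) = (LA A₀).comp (LA A) := LA_matMul hA₀.2 hA.2
  have hle : LinearMap.ker (LA A) ≤ LinearMap.range (LA F) := by
    intro x hx
    have hx0 : (LA F + (LinearMap.id : (ℕ →₀ K) →ₗ[K] (ℕ →₀ K))) x = 0 := by
      rw [← e1, hcomp, LinearMap.comp_apply, LinearMap.mem_ker.1 hx, map_zero]
    have h2 : LA F x + x = 0 := by simpa using hx0
    refine ⟨-x, ?_⟩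
    rw [map_neg, eq_neg_of_add_eq_zero_left h2, neg_neg]
  haveI := hMl.fdRange
  exact Submodule.finiteDimensional_of_le hle

lemma fdCoker {A : ℕ → ℕ → K} (hA : RCF A) (h : Fredholm A) :
    FiniteDimensional K ((ℕ →₀ K) ⧸ LinearMap.range (LA A)) := by
  obtain ⟨A₀, hA₀, hMr, _⟩ := h
  set F := matMul A A₀ - idm with hF_def
  have hcl : colFin F := hMr.toColFin
  have e1 : LA (matMul A A₀) = LA F + LinearMap.id := by
    have hsum : matMul A A₀ = F + idm := by rw [hF_def, sub_add_cancel]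
    rw [hsum, LA_add hcl colFin_idm, LA_idm]
  have hcomp : LA (matMul A A₀) = (LA A).comp (LA A₀) := LA_matMul hA.2 hA₀.2
  set r := LinearMap.range (LA A) with hr_def
  have hmap : Submodule.map r.mkQ (LinearMap.range (LA F)) = ⊤ := by
    rw [eq_top_iff]
    rintro z -
    obtain ⟨x, rfl⟩ := r.mkQ_surjective z
    have hmem : LA F x + x ∈ r := by
      have hval : LA F x + x = LA A (LA A₀ x) := by
        have := congrArg (fun φ : (ℕ →₀ K) →ₗ[K] (ℕ →₀ K) => φ x) (e1.symm.trans hcomp)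
        simpa using this
      rw [hval]
      exact ⟨LA A₀ x, rfl⟩
    refine ⟨-(LA F x), ⟨-x, by rw [map_neg]⟩, ?_⟩
    rw [Submodule.mkQ_apply, Submodule.mkQ_apply, Submodule.Quotient.eq]
    have : -(LA F x) - x = -(LA F x + x) := by abel
    rw [this]
    exact Submodule.neg_mem _ hmem
  haveI := hMr.fdRange
  have hFG : (⊤ : Submodule K ((ℕ →₀ K) ⧸ r)).FG := by
    rw [← hmap]
    exact ((Submodule.fg_iff_finiteDimensional _).2 inferInstance).map _
  exact Module.finite_def.2 hFG

end Fred


theorem stmt11 {K : Type*} [Field K] (A B : ℕ → ℕ → K)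
    (hA : RCF A) (hB : RCF B) (hFA : Fredholm A) (hFB : Fredholm B) :
    indx (matMul A B) = indx A + indx B := by
  unfold indx
  rw [LA_matMul hA.2 hB.2]
  rw [index_comp (LA B) (LA A) (fdKer hB hFB) (fdKer hA hFA) (fdCoker hB hFB) (fdCoker hA hFA)]
  ring
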